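/- arXiv:1210.6139 — 3 statements merged into one kernel-verified Lean document; each statement's English description precedes it below -/
import Mathlib

section
/- For every polynomial P ∈ ℚ[x_0,…,x_N] and all x,a ∈ ℝ, the derivative with respect to x of the evaluated expression satisfies d/dx [P(K(x,a))] = −2·(D_{K1}P)(K(x,a)). -/
/-- Generalized binomial coefficient `C(t, k) = t(t-1)⋯(t-k+1)/k!` of a real number. -/
noncomputable def genBinom (t : ℝ) (k : ℕ) : ℝ :=
  (∏ j ∈ Finset.range k, (t - j)) / (Nat.factorial k)

/-- The binary Kravchuk polynomial `K_n(x,a) = ∑_{i=0}^n (-1)^i C(x,i) C(a-x, n-i)`. -/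
noncomputable def K (n : ℕ) (x a : ℝ) : ℝ :=
  ∑ i ∈ Finset.range (n + 1), (-1 : ℝ) ^ i * genBinom x i * genBinom (a - x) (n - i)

/-- The variable `x_i` of `ℚ[x_0,…,x_N]` (for `i ≤ N`). -/
noncomputable def Xv (N : ℕ) (i : ℕ) : MvPolynomial (Fin (N + 1)) ℚ :=
  if h : i ≤ N then MvPolynomial.X ⟨i, Nat.lt_succ_of_le h⟩ else 0

/-- The first Kravchuk derivation: `D_{K1}(x_0)=0`,
`D_{K1}(x_m)=∑_{i=1}^m ((1-(-1)^i)/(2i)) x_{m-i}`. -/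
noncomputable def DK1 (N : ℕ) :
    Derivation ℚ (MvPolynomial (Fin (N + 1)) ℚ) (MvPolynomial (Fin (N + 1)) ℚ) :=
  MvPolynomial.mkDerivation ℚ fun m : Fin (N + 1) =>
    ∑ i ∈ Finset.Icc 1 (m : ℕ),
      MvPolynomial.C ((1 - (-1 : ℚ) ^ i) / (2 * i)) * Xv N ((m : ℕ) - i)

lemma genBinom_zero (x : ℝ) : genBinom x 0 = 1 := by simp [genBinom]

lemma genBinom_succ (x : ℝ) (k : ℕ) :
    genBinom x (k + 1) = genBinom x k * (x - k) / (k + 1) := by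
  have hf : ((Nat.factorial k : ℝ)) ≠ 0 := by positivity
  have h1 : ((k:ℝ) + 1) ≠ 0 := by positivity
  simp only [genBinom, Finset.prod_range_succ, Nat.factorial_succ, Nat.cast_mul,
    Nat.cast_add, Nat.cast_one]
  field_simp
  try ring
  try exact Or.inl trivial

lemma genBinom_succ_shift (x : ℝ) (k : ℕ) :
    genBinom (x + 1) (k + 1) = (x + 1) * genBinom x k / (k + 1) := by
  have hf : ((Nat.factorial k : ℝ)) ≠ 0 := by positivity
  have h1 : ((k:ℝ) + 1) ≠ 0 := by positivity
  have h : ∏ j ∈ Finset.range (k+1), (x + 1 - j) = (x+1) * ∏ j ∈ Finset.range k, (x - j) := by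
    rw [Finset.prod_range_succ' (fun j => (x + 1 - (j:ℕ)))]
    simp only [Nat.cast_zero, sub_zero, Nat.cast_add, Nat.cast_one]
    rw [mul_comm]
    congr 1
    exact Finset.prod_congr rfl (fun j _ => by ring)
  simp only [genBinom, h, Nat.factorial_succ, Nat.cast_mul, Nat.cast_add, Nat.cast_one]
  field_simp
  try ring
  try exact Or.inl trivial

lemma genBinom_pascal (x : ℝ) (k : ℕ) :
    genBinom (x + 1) (k + 1) = genBinom x (k + 1) + genBinom x k := by
  have h : ((k:ℝ) + 1) ≠ 0 := by positivity
  rw [genBinom_succ_shift, genBinom_succ, div_add' _ _ _ h]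
  congr 1
  ring



lemma sum_shift (x : ℝ) (k : ℕ) :
    ∑ j ∈ Finset.range k, (-1:ℝ)^j * genBinom (x+1) (k-j) = genBinom x k - (-1)^k := by
  induction k with
  | zero => simp [genBinom_zero]
  | succ k ih =>
    rw [Finset.sum_range_succ' (fun j => (-1:ℝ)^j * genBinom (x+1) (k+1-j))]
    have h1 : ∀ j ∈ Finset.range k, (-1:ℝ)^(j+1) * genBinom (x+1) (k+1-(j+1))
        = -((-1:ℝ)^j * genBinom (x+1) (k-j)) := by
      intro j _
      have : k + 1 - (j+1) = k - j := by omega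
      rw [this, pow_succ]
      ring
    rw [Finset.sum_congr rfl h1, Finset.sum_neg_distrib, ih]
    simp only [Nat.sub_zero, pow_zero, one_mul, genBinom_pascal]
    ring

lemma hasDerivAt_genBinom (x : ℝ) (k : ℕ) :
    HasDerivAt (fun t => genBinom t k)
      (∑ j ∈ Finset.range k, (-1:ℝ)^j / (j+1) * genBinom x (k-(j+1))) x := by
  induction k with
  | zero =>
    simp only [genBinom_zero, Finset.range_zero, Finset.sum_empty]
    exact hasDerivAt_const x 1
  | succ k ih =>
    have hD : HasDerivAt (fun t => genBinom t k * (t - k) / (k+1))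
        (((∑ j ∈ Finset.range k, (-1:ℝ)^j / (j+1) * genBinom x (k-(j+1))) * (x - k)
          + genBinom x k * 1) / (k+1)) x :=
      (ih.mul ((hasDerivAt_id x).sub_const (k:ℝ))).div_const _
    have heq : (fun t => genBinom t (k+1)) = fun t => genBinom t k * (t - k) / (k+1) := by
      funext t; rw [genBinom_succ]
    rw [heq]
    convert hD using 1
    set D := ∑ j ∈ Finset.range k, (-1:ℝ)^j / (j+1) * genBinom x (k-(j+1)) with hDdef
    have hk1 : ((k:ℝ)+1) ≠ 0 := by positivity
    rw [eq_div_iff hk1]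
    -- goal : (∑ j ∈ range (k+1), ...) * (k+1) = D * (x-k) + genBinom x k * 1
    rw [Finset.sum_range_succ]
    have hlast : (-1:ℝ)^k / (k+1) * genBinom x (k+1-(k+1)) = (-1)^k / (k+1) := by
      simp [genBinom_zero]
    rw [hlast]
    have hterm : ∀ j ∈ Finset.range k,
        (-1:ℝ)^j / (j+1) * genBinom x (k+1-(j+1)) * ((k:ℝ)+1)
        = (x - k) * ((-1:ℝ)^j / (j+1) * genBinom x (k-(j+1)))
          + (-1:ℝ)^j * genBinom (x+1) (k+1-(j+1)) := by
      intro j hj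
      have hjk : j < k := Finset.mem_range.mp hj
      have h1 : k + 1 - (j+1) = (k - (j+1)) + 1 := by omega
      have h2 : ((k - (j+1) : ℕ) : ℝ) = (k:ℝ) - (j:ℝ) - 1 := by
        have : (k:ℕ) - (j+1) + (j+1) = k := by omega
        have := congrArg (fun n : ℕ => (n:ℝ)) this
        push_cast at this
        linarith
      rw [h1, genBinom_succ, genBinom_succ_shift, h2,
        show ((k:ℝ) - (j:ℝ) - 1) + 1 = (k:ℝ) - (j:ℝ) by ring]
      have h3 : (k:ℝ) - (j:ℝ) ≠ 0 := by
        have : (j:ℝ) < (k:ℝ) := by exact_mod_cast hjk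
        intro h; nlinarith
      have h4 : ((j:ℝ)+1) ≠ 0 := by positivity
      field_simp
      ring
    rw [add_mul, Finset.sum_mul, Finset.sum_congr rfl hterm, Finset.sum_add_distrib,
      hDdef, ← Finset.mul_sum]
    simp only [Nat.succ_sub_succ]
    rw [sum_shift]
    field_simp
    ring


lemma sumA (n : ℕ) (x y : ℝ) :
    ∑ i ∈ Finset.range (n+1), ∑ j ∈ Finset.range i,
      (-1:ℝ)^i * ((-1:ℝ)^j/(j+1) * genBinom x (i-(j+1))) * genBinom y (n-i)
    = ∑ j ∈ Finset.range n, -(1/((j:ℝ)+1)) *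
        ∑ m ∈ Finset.range (n-(j+1)+1), (-1:ℝ)^m * genBinom x m * genBinom y (n-(j+1)-m) := by
  have hcond : ∀ i j : ℕ, i ∈ Finset.range (n+1) ∧ j ∈ Finset.range i ↔
      i ∈ Finset.Icc (j+1) n ∧ j ∈ Finset.range n := by
    intro i j
    simp only [Finset.mem_range, Finset.mem_Icc]
    omega
  rw [Finset.sum_comm' hcond]
  apply Finset.sum_congr rfl
  intro j hj
  have hjn : j < n := Finset.mem_range.mp hj
  rw [← Finset.Ico_add_one_right_eq_Icc, Finset.sum_Ico_eq_sum_range]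
  have hsz : n + 1 - (j+1) = n - (j+1) + 1 := by omega
  rw [hsz, Finset.mul_sum]
  apply Finset.sum_congr rfl
  intro m hm
  have hmn : m < n - (j+1) + 1 := Finset.mem_range.mp hm
  have h1 : j + 1 + m - (j+1) = m := by omega
  have h2 : n - (j+1+m) = n - (j+1) - m := by omega
  rw [h1, h2, pow_add, pow_succ]
  ring_nf
  rw [mul_comm j 2, pow_mul]
  norm_num

lemma sumB (n : ℕ) (x y : ℝ) :
    ∑ i ∈ Finset.range (n+1), ∑ j ∈ Finset.range (n-i),
      ((-1:ℝ)^i * genBinom x i) * (((-1:ℝ)^j/(j+1) * genBinom y (n-i-(j+1))) * (0-1))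
    = ∑ j ∈ Finset.range n, (-((-1:ℝ)^j/((j:ℝ)+1))) *
        ∑ m ∈ Finset.range (n-(j+1)+1), (-1:ℝ)^m * genBinom x m * genBinom y (n-(j+1)-m) := by
  have hcond : ∀ i j : ℕ, i ∈ Finset.range (n+1) ∧ j ∈ Finset.range (n-i) ↔
      i ∈ Finset.range (n-j) ∧ j ∈ Finset.range n := by
    intro i j
    simp only [Finset.mem_range]
    omega
  rw [Finset.sum_comm' hcond]
  apply Finset.sum_congr rfl
  intro j hj
  have hjn : j < n := Finset.mem_range.mp hj
  have hsz : n - j = n - (j+1) + 1 := by omega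
  rw [hsz, Finset.mul_sum]
  apply Finset.sum_congr rfl
  intro m hm
  have h2 : n - m - (j+1) = n - (j+1) - m := by omega
  rw [h2]
  ring

noncomputable def Dg (y : ℝ) (k : ℕ) : ℝ :=
  ∑ j ∈ Finset.range k, (-1:ℝ)^j/(j+1) * genBinom y (k-(j+1))

lemma hasDerivAt_K (n : ℕ) (a x : ℝ) :
    HasDerivAt (fun t => K n t a)
      (-2 * ∑ i ∈ Finset.Icc 1 n, (1-(-1:ℝ)^i)/(2*(i:ℝ)) * K (n-i) x a) x := by
  have hterm : ∀ i ∈ Finset.range (n+1), HasDerivAt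
      (fun t => (-1:ℝ)^i * genBinom t i * genBinom (a-t) (n-i))
      (((-1:ℝ)^i * Dg x i) * genBinom (a-x) (n-i)
        + ((-1:ℝ)^i * genBinom x i) * (Dg (a-x) (n-i) * (0-1))) x := by
    intro i _
    have h1 : HasDerivAt (fun t => (-1:ℝ)^i * genBinom t i) ((-1:ℝ)^i * Dg x i) x :=
      (hasDerivAt_genBinom x i).const_mul _
    have hinner : HasDerivAt (fun t : ℝ => a - t) (0-1) x :=
      (hasDerivAt_const x a).sub (hasDerivAt_id x)
    have h2 : HasDerivAt (fun t => genBinom (a-t) (n-i)) (Dg (a-x) (n-i) * (0-1)) x := by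
      have := (hasDerivAt_genBinom (a-x) (n-i)).comp x hinner
      simpa [Function.comp_def, Dg] using this
    exact h1.mul h2
  have hsum := HasDerivAt.sum hterm
  have hKfun : (fun t => K n t a)
      = (fun t => ∑ i ∈ Finset.range (n+1),
          (-1:ℝ)^i * genBinom t i * genBinom (a-t) (n-i)) := rfl
  rw [hKfun]
  convert hsum using 1
  case e'_4 => rfl
  case e'_5 => rfl
  case e'_8 => funext t; rw [Finset.sum_apply]
  rw [Finset.sum_add_distrib]
  have hA : ∑ i ∈ Finset.range (n+1), ((-1:ℝ)^i * Dg x i) * genBinom (a-x) (n-i)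
      = ∑ i ∈ Finset.range (n+1), ∑ j ∈ Finset.range i,
          (-1:ℝ)^i * ((-1:ℝ)^j/(j+1) * genBinom x (i-(j+1))) * genBinom (a-x) (n-i) := by
    apply Finset.sum_congr rfl
    intro i _
    rw [Dg, Finset.mul_sum, Finset.sum_mul]
  have hB : ∑ i ∈ Finset.range (n+1), ((-1:ℝ)^i * genBinom x i) * (Dg (a-x) (n-i) * (0-1))
      = ∑ i ∈ Finset.range (n+1), ∑ j ∈ Finset.range (n-i),
          ((-1:ℝ)^i * genBinom x i) * (((-1:ℝ)^j/(j+1) * genBinom (a-x) (n-i-(j+1))) * (0-1)) := by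
    apply Finset.sum_congr rfl
    intro i _
    rw [Dg, Finset.sum_mul, Finset.mul_sum]
  rw [hA, hB, sumA, sumB, ← Finset.sum_add_distrib, ← Finset.Ico_add_one_right_eq_Icc,
    Finset.sum_Ico_eq_sum_range, Finset.mul_sum]
  have hsz : n + 1 - 1 = n := by omega
  rw [hsz]
  apply Finset.sum_congr rfl
  intro j hj
  have hK : K (n-(j+1)) x a
      = ∑ m ∈ Finset.range (n-(j+1)+1), (-1:ℝ)^m * genBinom x m * genBinom (a-x) (n-(j+1)-m) := rfl
  have h1j : (1:ℕ) + j = j + 1 := by omega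
  rw [h1j, ← hK, K]
  push_cast
  rw [pow_add]
  have hj1 : ((j:ℝ)+1) ≠ 0 := by positivity
  field_simp
  ring

open MvPolynomial in
lemma aeval_DK1_X (N : ℕ) (i : Fin (N + 1)) (x a : ℝ) :
    MvPolynomial.aeval (fun i : Fin (N + 1) => K (i : ℕ) x a) (DK1 N (MvPolynomial.X i))
      = ∑ j ∈ Finset.Icc 1 (i : ℕ), (1-(-1:ℝ)^j)/(2*(j:ℝ)) * K ((i:ℕ)-j) x a := by
  rw [DK1, MvPolynomial.mkDerivation_X, map_sum]
  apply Finset.sum_congr rfl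
  intro j hj
  have hji : j ≤ (i : ℕ) := (Finset.mem_Icc.mp hj).2
  have hiN : (i : ℕ) - j ≤ N := by omega
  rw [Xv, dif_pos hiN, map_mul, MvPolynomial.aeval_C, MvPolynomial.aeval_X]
  push_cast
  rfl

open MvPolynomial in
lemma hasDerivAt_aeval_K (N : ℕ) (P : MvPolynomial (Fin (N + 1)) ℚ) (x a : ℝ) :
    HasDerivAt (fun t : ℝ => MvPolynomial.aeval (fun i : Fin (N + 1) => K (i : ℕ) t a) P)
      (-2 * MvPolynomial.aeval (fun i : Fin (N + 1) => K (i : ℕ) x a) (DK1 N P)) x := by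
  induction P using MvPolynomial.induction_on with
  | C r =>
    have h0 : DK1 N (MvPolynomial.C r) = 0 := by
      rw [← MvPolynomial.algebraMap_eq]
      exact Derivation.map_algebraMap _ _
    simp only [h0, map_zero, mul_zero, MvPolynomial.aeval_C]
    exact hasDerivAt_const x _
  | add P Q ihP ihQ =>
    simp only [map_add]
    convert ihP.add ihQ using 1
    case e'_4 => rfl
    case e'_5 => rfl
    case e'_8 => rfl
    ring
  | mul_X P i ih =>
    have hKi : HasDerivAt (fun t => K (i : ℕ) t a)
        (-2 * MvPolynomial.aeval (fun i : Fin (N + 1) => K (i : ℕ) x a)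
          (DK1 N (MvPolynomial.X i))) x := by
      rw [aeval_DK1_X]
      exact hasDerivAt_K (i : ℕ) a x
    have hmul := ih.mul hKi
    have hfun : (fun t : ℝ => MvPolynomial.aeval (fun i : Fin (N + 1) => K (i : ℕ) t a)
        (P * MvPolynomial.X i))
        = fun t : ℝ => (MvPolynomial.aeval (fun i : Fin (N + 1) => K (i : ℕ) t a) P)
            * K (i : ℕ) t a := by
      funext t
      rw [map_mul, MvPolynomial.aeval_X]
    rw [hfun]
    convert hmul using 1
    case e'_4 => rfl
    case e'_5 => rfl
    case e'_8 => rfl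
    rw [Derivation.leibniz]
    simp only [smul_eq_mul, map_add, map_mul, MvPolynomial.aeval_X]
    ring

/-- `d/dx [P(K(x,a))] = -2 (D_{K1}P)(K(x,a))`. -/
theorem deriv_aeval_kravchuk_x (N : ℕ) (P : MvPolynomial (Fin (N + 1)) ℚ) (x a : ℝ) :
    deriv (fun t : ℝ => MvPolynomial.aeval (fun i : Fin (N + 1) => K (i : ℕ) t a) P) x
      = -2 * MvPolynomial.aeval (fun i : Fin (N + 1) => K (i : ℕ) x a) (DK1 N P) := by
  exact (hasDerivAt_aeval_K N P x a).deriv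
end

section
/- For all integers k ≥ 0, n ≥ 0 and every fixed a ∈ ℝ, the k-th derivative of the Kravchuk polynomial with respect to x satisfies d^k/dx^k K_n(x,a) = (−1)^k · ∑_{i=0}^{n−k} K_i(x,a) · S^{(k)}(n−i), where the sum is empty (so the derivative is 0) when k > n. -/
/-- Signed Stirling numbers of the first kind: `t(t-1)⋯(t-m+1) = ∑_k s(m,k) t^k`. -/
noncomputable def stirling1 (m k : ℕ) : ℝ := (descPochhammer ℝ m).coeff k

/-- `S^{(k)}(n) = ∑_{m=k}^n binom(n-1,m-1) (2^m k!/m!) s(m,k)` for `k ≥ 1` (zero for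
`n < k`), with `S^{(0)}(n) = 1` if `n = 0` and `0` otherwise. -/
noncomputable def Sfun (k n : ℕ) : ℝ :=
  if k = 0 then (if n = 0 then 1 else 0)
  else ∑ m ∈ Finset.Icc k n,
    ((n - 1).choose (m - 1) : ℝ) * (2 ^ m * (Nat.factorial k) / (Nat.factorial m))
      * stirling1 m k


open Finset Polynomial

noncomputable def Pb (i : ℕ) : Polynomial ℝ :=
  ((Nat.factorial i : ℝ))⁻¹ • descPochhammer ℝ i

noncomputable def ee (t : ℕ) : ℝ := (-1 : ℝ) ^ t / (t + 1)

lemma descPoch_eval (i : ℕ) (x : ℝ) :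
    (descPochhammer ℝ i).eval x = ∏ j ∈ range i, (x - j) := by
  induction i with
  | zero => simp [descPochhammer]
  | succ n ih => rw [descPochhammer_succ_eval, ih, prod_range_succ]

lemma Pb_eval (i : ℕ) (x : ℝ) : (Pb i).eval x = genBinom x i := by
  simp [Pb, genBinom, descPoch_eval, div_eq_inv_mul, mul_comm]

lemma Pb_succ (i : ℕ) :
    Pb (i + 1) = ((i : ℝ) + 1)⁻¹ • (Pb i * (X - Polynomial.C (i : ℝ))) := by
  simp only [Pb, descPochhammer_succ_right, Nat.factorial_succ, Nat.cast_mul,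
    mul_inv, smul_mul_assoc, smul_smul, Polynomial.C_eq_natCast]
  push_cast
  ring_nf

lemma Pb_mul_X_sub (m : ℕ) : Pb m * (X - Polynomial.C (m:ℝ)) = ((m:ℝ)+1) • Pb (m+1) := by
  rw [Pb_succ, smul_smul, mul_inv_cancel₀ (by positivity), one_smul]

lemma PD (i : ℕ) : derivative (Pb i) = ∑ t ∈ range i, ee t • Pb (i - (t+1)) := by
  induction i with
  | zero => simp [Pb, descPochhammer]
  | succ i ih =>
    have hterm : ∀ t ∈ range i, ee t • (Pb (i-(t+1)) * (X - Polynomial.C (i:ℝ)))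
        = (ee t * ((i-t:ℕ):ℝ)) • Pb (i-t) - ((-1:ℝ)^t) • Pb (i-(t+1)) := by
      intro t ht
      rw [mem_range] at ht
      have hm : (i:ℝ) = ((i-(t+1):ℕ):ℝ) + ((t:ℝ)+1) := by
        rw [Nat.cast_sub (by omega : t+1 ≤ i)]; push_cast; ring
      have h1 : X - Polynomial.C (i:ℝ)
          = (X - Polynomial.C (((i-(t+1):ℕ)):ℝ)) - Polynomial.C ((t:ℝ)+1) := by
        rw [hm, Polynomial.C_add]; ring
      rw [h1, mul_sub, Pb_mul_X_sub]
      have h2 : (i-(t+1)) + 1 = i - t := by omega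
      have h3 : (((i-(t+1):ℕ)):ℝ) + 1 = ((i-t:ℕ):ℝ) := by
        rw [Nat.cast_sub (by omega), Nat.cast_sub (by omega)]; push_cast; ring
      rw [h2, h3]
      have h4 : Pb (i-(t+1)) * Polynomial.C ((t:ℝ)+1) = ((t:ℝ)+1) • Pb (i-(t+1)) := by
        rw [mul_comm]; exact (Polynomial.smul_eq_C_mul _).symm
      rw [smul_sub, h4, smul_smul, smul_smul]
      congr 2
      rw [ee]
      field_simp
    have key : derivative (Pb i) * (X - Polynomial.C (i:ℝ)) + Pb i
        = ∑ t ∈ range (i+1), (((i:ℝ)+1) * ee t) • Pb (i - t) := by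
      rw [ih, sum_mul]
      simp only [smul_mul_assoc]
      rw [sum_congr rfl hterm, sum_sub_distrib]
      have hB : Pb i - ∑ t ∈ range i, ((-1:ℝ)^t) • Pb (i-(t+1))
          = ∑ t ∈ range (i+1), ((-1:ℝ)^t) • Pb (i-t) := by
        rw [Finset.sum_range_succ' (fun t => ((-1:ℝ)^t) • Pb (i-t))]
        simp only [pow_succ, mul_neg_one, neg_smul, Nat.sub_zero, pow_zero, one_smul,
          Finset.sum_neg_distrib]
        abel
      have hA : ∑ t ∈ range i, (ee t * ((i-t:ℕ):ℝ)) • Pb (i-t)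
          = ∑ t ∈ range (i+1), (ee t * ((i-t:ℕ):ℝ)) • Pb (i-t) := by
        rw [Finset.sum_range_succ]
        simp
      have hre : (∑ t ∈ range i, (ee t * ((i-t:ℕ):ℝ)) • Pb (i-t))
            - (∑ t ∈ range i, ((-1:ℝ)^t) • Pb (i-(t+1))) + Pb i
          = (∑ t ∈ range i, (ee t * ((i-t:ℕ):ℝ)) • Pb (i-t))
            + (Pb i - ∑ t ∈ range i, ((-1:ℝ)^t) • Pb (i-(t+1))) := by abel
      rw [hre, hB, hA, ← sum_add_distrib]
      apply sum_congr rfl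
      intro t ht
      rw [mem_range, Nat.lt_succ_iff] at ht
      rw [← add_smul]
      congr 1
      rw [Nat.cast_sub ht, ee]
      field_simp
      ring
    rw [Pb_succ, derivative_smul, derivative_mul, derivative_sub, derivative_X,
      derivative_C, sub_zero, mul_one, key, Finset.smul_sum]
    apply sum_congr rfl
    intro t ht
    rw [smul_smul, inv_mul_cancel_left₀ (by positivity), Nat.succ_sub_succ]

lemma iter_deriv_eval (k : ℕ) (p : Polynomial ℝ) (x : ℝ) :
    deriv^[k] (fun t => p.eval t) x = ((⇑(derivative (R := ℝ)))^[k] p).eval x := by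
  induction k generalizing p x with
  | zero => simp
  | succ k ih =>
    rw [Function.iterate_succ_apply, Function.iterate_succ_apply]
    have : deriv (fun t => p.eval t) = fun t => (derivative p).eval t := by
      funext t; exact Polynomial.deriv p
    rw [this, ih]

lemma iter_deriv_sum_smul (k : ℕ) {s : Finset ℕ} (c : ℕ → ℝ) (p : ℕ → Polynomial ℝ) :
    (⇑(derivative (R := ℝ)))^[k] (∑ j ∈ s, c j • p j)
      = ∑ j ∈ s, c j • (⇑(derivative (R := ℝ)))^[k] (p j) := by
  induction k generalizing p with
  | zero => simp
  | succ k ih =>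
    rw [Function.iterate_succ_apply, map_sum]
    simp_rw [derivative_smul]
    rw [ih (p := fun j => derivative (p j))]
    simp_rw [Function.iterate_succ_apply]

noncomputable def Qb (a : ℝ) (m : ℕ) : Polynomial ℝ := (Pb m).comp (Polynomial.C a - X)

lemma Qb_eval (a : ℝ) (m : ℕ) (x : ℝ) : (Qb a m).eval x = genBinom (a - x) m := by
  rw [Qb, eval_comp]
  simp [Pb_eval]

noncomputable def Kp (n : ℕ) (a : ℝ) : Polynomial ℝ :=
  ∑ i ∈ range (n+1), ((-1:ℝ)^i) • (Pb i * Qb a (n-i))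

lemma Kp_eval (n : ℕ) (a x : ℝ) : (Kp n a).eval x = K n x a := by
  rw [Kp, K, eval_finset_sum]
  apply sum_congr rfl
  intro i _
  rw [eval_smul, eval_mul, Pb_eval, Qb_eval, smul_eq_mul, mul_assoc]

lemma swapDiag {M : Type*} [AddCommMonoid M] (n : ℕ) (F : ℕ → ℕ → M) :
    ∑ j ∈ range n, ∑ i ∈ range (n - j), F j i
      = ∑ i ∈ range n, ∑ j ∈ range (n - i), F j i := by
  rw [← Finset.sum_range_diag_flip n F]
  have := Finset.sum_range_diag_flip n (fun i j => F j i)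
  rw [← this]
  apply sum_congr rfl
  intro m _
  rw [← Finset.sum_range_reflect]
  apply sum_congr rfl
  intro t ht
  rw [mem_range, Nat.lt_succ_iff] at ht
  congr 1
  omega

lemma QD (a : ℝ) (m : ℕ) :
    derivative (Qb a m) = -∑ t ∈ range m, ee t • Qb a (m-(t+1)) := by
  rw [Qb, derivative_comp, PD]
  simp only [derivative_sub, derivative_C, derivative_X, zero_sub, Polynomial.sum_comp,
    Polynomial.smul_comp, neg_mul, one_mul, neg_one_mul]
  rfl

lemma KD (n : ℕ) (a : ℝ) :
    derivative (Kp n a)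
      = ∑ t ∈ range n, (-(((-1:ℝ)^t) * ee t) - ee t) • Kp (n-(t+1)) a := by
  have expand : derivative (Kp n a)
      = (∑ i ∈ range (n+1), ∑ t ∈ range i,
          (((-1:ℝ)^i) * ee t) • (Pb (i-(t+1)) * Qb a (n-i)))
        + (-∑ i ∈ range (n+1), ∑ t ∈ range (n-i),
          (((-1:ℝ)^i) * ee t) • (Pb i * Qb a (n-i-(t+1)))) := by
    rw [Kp, map_sum]
    simp only [derivative_smul, derivative_mul, PD, QD, smul_add]
    rw [sum_add_distrib]
    congr 1
    · apply sum_congr rfl; intro i _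
      rw [sum_mul, smul_sum]
      apply sum_congr rfl; intro t _
      rw [smul_mul_assoc, smul_smul]
    · simp only [mul_neg, smul_neg, Finset.mul_sum, Finset.smul_sum,
        ← Finset.sum_neg_distrib]
      apply sum_congr rfl; intro i _
      apply sum_congr rfl; intro t _
      rw [Algebra.mul_smul_comm, smul_smul]
  have T1 : (∑ i ∈ range (n+1), ∑ t ∈ range i,
          (((-1:ℝ)^i) * ee t) • (Pb (i-(t+1)) * Qb a (n-i)))
      = ∑ t ∈ range n, (-(((-1:ℝ)^t) * ee t)) • Kp (n-(t+1)) a := by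
    rw [Finset.sum_range_succ' (fun i => ∑ t ∈ range i,
          (((-1:ℝ)^i) * ee t) • (Pb (i-(t+1)) * Qb a (n-i)))]
    simp only [range_zero, sum_empty, add_zero]
    have step : ∀ m ∈ range n, ∑ t ∈ range (m+1),
          (((-1:ℝ)^(m+1)) * ee t) • (Pb (m+1-(t+1)) * Qb a (n-(m+1)))
        = ∑ k ∈ range (m+1), (fun t u => (((-1:ℝ)^(t+u+1)) * ee t)
            • (Pb u * Qb a (n-t-u-1))) k (m-k) := by
      intro m hm
      rw [mem_range] at hm
      apply sum_congr rfl; intro t ht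
      rw [mem_range, Nat.lt_succ_iff] at ht
      show _ = (((-1:ℝ)^(t+(m-t)+1)) * ee t) • (Pb (m-t) * Qb a (n-t-(m-t)-1))
      have e1 : t + (m - t) + 1 = m + 1 := by omega
      have e2 : m + 1 - (t+1) = m - t := by omega
      have e3 : n - t - (m - t) - 1 = n - (m+1) := by omega
      rw [e1, e2, e3]
    rw [sum_congr rfl step, Finset.sum_range_diag_flip n (fun t u => (((-1:ℝ)^(t+u+1)) * ee t)
            • (Pb u * Qb a (n-t-u-1)))]
    apply sum_congr rfl; intro t ht
    rw [mem_range] at ht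
    have hnt : n - (t+1) + 1 = n - t := by omega
    rw [Kp, smul_sum, hnt]
    apply sum_congr rfl; intro u hu
    rw [smul_smul]
    have e4 : n - t - u - 1 = n - (t+1) - u := by omega
    rw [e4]
    congr 1
    rw [pow_add, pow_succ]
    ring
  have T2 : (∑ i ∈ range (n+1), ∑ t ∈ range (n-i),
          (((-1:ℝ)^i) * ee t) • (Pb i * Qb a (n-i-(t+1))))
      = ∑ t ∈ range n, ee t • Kp (n-(t+1)) a := by
    rw [Finset.sum_range_succ]
    simp only [Nat.sub_self, range_zero, sum_empty, add_zero]
    rw [swapDiag]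
    apply sum_congr rfl; intro t ht
    rw [mem_range] at ht
    have hnt : n - (t+1) + 1 = n - t := by omega
    rw [Kp, smul_sum, hnt]
    apply sum_congr rfl; intro i hi
    rw [smul_smul]
    have e4 : n - i - (t+1) = n - (t+1) - i := by omega
    rw [e4]
    congr 1
    ring
  rw [expand, T1, T2, ← Finset.sum_neg_distrib, ← sum_add_distrib]
  apply sum_congr rfl; intro t _
  rw [← neg_smul, ← add_smul, sub_eq_add_neg]

lemma stirling1_eq_zero {m k : ℕ} (h : m < k) : stirling1 m k = 0 := by
  rw [stirling1]
  apply Polynomial.coeff_eq_zero_of_natDegree_lt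
  rwa [descPochhammer_natDegree]

lemma stirling1_succ_one (m : ℕ) :
    stirling1 (m+1) 1 = (-1:ℝ)^m * (Nat.factorial m) := by
  induction m with
  | zero => simp [stirling1, descPochhammer]
  | succ m ih =>
    rw [stirling1, descPochhammer_succ_right, ← Polynomial.C_eq_natCast]
    have h : (descPochhammer ℝ (m+1) * (X - Polynomial.C ((m+1:ℕ):ℝ))).coeff (0+1)
        = (descPochhammer ℝ (m+1)).coeff 0 - (descPochhammer ℝ (m+1)).coeff 1 * ((m+1:ℕ):ℝ) :=
      Polynomial.coeff_mul_X_sub_C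
    norm_num only at h
    rw [h]
    rw [Polynomial.coeff_zero_eq_eval_zero,
      descPochhammer_ne_zero_eval_zero (R := ℝ) (Nat.succ_ne_zero m), ← stirling1, ih,
      Nat.factorial_succ]
    push_cast
    ring

noncomputable def cc (k m : ℕ) : ℝ :=
  (Nat.factorial k : ℝ) * stirling1 m k / (Nat.factorial m)

lemma cc_eq_zero {k m : ℕ} (h : m < k) : cc k m = 0 := by
  rw [cc, stirling1_eq_zero h, mul_zero, zero_div]

lemma cc_one_succ (t : ℕ) : cc 1 (t+1) = ee t := by
  rw [cc, stirling1_succ_one, ee, Nat.factorial_one, Nat.factorial_succ]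
  push_cast
  rw [div_eq_div_iff (by positivity) (by positivity)]
  ring

lemma Pb_coeff (m k : ℕ) : (Pb m).coeff k = (stirling1 m k) / (Nat.factorial m) := by
  rw [Pb, Polynomial.coeff_smul, stirling1, smul_eq_mul, div_eq_inv_mul]

lemma cc_conv (k m : ℕ) :
    cc (k+1) m = ∑ p ∈ range (m+1), cc 1 p * cc k (m-p) := by
  have hPD := congrArg (fun q => Polynomial.coeff q k) (PD m)
  simp only [Polynomial.finset_sum_coeff, Polynomial.coeff_smul, smul_eq_mul,
    Polynomial.coeff_derivative, Pb_coeff] at hPD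
  rw [Finset.sum_range_succ' (fun p => cc 1 p * cc k (m-p))]
  have hc0 : cc 1 0 = 0 := cc_eq_zero (by omega)
  rw [hc0, zero_mul, add_zero]
  have : ∀ t ∈ range m, cc 1 (t+1) * cc k (m-(t+1))
      = (Nat.factorial k : ℝ) * (ee t * (stirling1 (m-(t+1)) k / (Nat.factorial (m-(t+1))))) := by
    intro t _
    rw [cc_one_succ, cc]
    ring
  rw [sum_congr rfl this, ← Finset.mul_sum, ← hPD, cc, Nat.factorial_succ]
  push_cast
  field_simp

noncomputable def TT (n m : ℕ) : ℝ :=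
  if m ≤ n then ((n-1).choose (m-1) : ℝ) * 2^m else 0

lemma TT_eq_zero {n m : ℕ} (h : n < m) : TT n m = 0 := by
  rw [TT, if_neg (by omega)]

lemma Sfun_eq_zero {k n : ℕ} (hk : k ≠ 0) (h : n < k) : Sfun k n = 0 := by
  rw [Sfun, if_neg hk, Finset.Icc_eq_empty (by omega), sum_empty]

lemma Sfun_eq {k : ℕ} (hk : k ≠ 0) (n : ℕ) :
    Sfun k n = ∑ m ∈ range (n+1), TT n m * cc k m := by
  rw [Sfun, if_neg hk]
  have h1 : ∀ m ∈ Icc k n,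
      ((n-1).choose (m-1) : ℝ) * (2^m * (Nat.factorial k) / (Nat.factorial m))
        * stirling1 m k = TT n m * cc k m := by
    intro m hm
    rw [mem_Icc] at hm
    rw [TT, if_pos hm.2, cc]
    ring
  rw [sum_congr rfl h1]
  apply Finset.sum_subset
  · intro m hm
    rw [mem_Icc] at hm
    rw [mem_range]
    omega
  · intro m hm hnotin
    rw [mem_range] at hm
    rw [mem_Icc] at hnotin
    rw [cc_eq_zero (by omega), mul_zero]

lemma neg_one_sq_pow (t : ℕ) : (-1:ℝ)^t * (-1:ℝ)^t = 1 := by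
  rw [← pow_add, ← two_mul, pow_mul]
  norm_num

lemma Sfun_one_succ (t : ℕ) : Sfun 1 (t+1) = ((-1:ℝ)^t) * ee t + ee t := by
  have ht1 : ((t:ℝ)+1) ≠ 0 := by positivity
  have h1 : Sfun 1 (t+1)
      = ∑ i ∈ range (t+1), ((t.choose i : ℝ) * ((-1:ℝ)^i * 2^(i+1) / ((i:ℝ)+1))) := by
    rw [Sfun, if_neg one_ne_zero]
    rw [show Icc 1 (t+1) = Ico 1 (t+2) by rw [show t+2 = (t+1)+1 from rfl, Finset.Ico_add_one_right_eq_Icc]]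
    rw [Finset.sum_Ico_eq_sum_range]
    apply sum_congr (by norm_num)
    intro i hi
    rw [show 1 + i = i + 1 by ring, stirling1_succ_one]
    simp only [Nat.add_sub_cancel, Nat.factorial_one, Nat.factorial_succ]
    have : ((i:ℝ)+1) * (Nat.factorial i) ≠ 0 := by positivity
    field_simp
    push_cast
    ring
  have h2 : ((t:ℝ)+1) * Sfun 1 (t+1) = 1 + (-1:ℝ)^t := by
    rw [h1, Finset.mul_sum]
    have hterm : ∀ i ∈ range (t+1),
        ((t:ℝ)+1) * ((t.choose i : ℝ) * ((-1:ℝ)^i * 2^(i+1) / ((i:ℝ)+1)))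
          = -((((t+1).choose (i+1) : ℝ)) * (-2:ℝ)^(i+1)) := by
      intro i _
      have hc : ((t:ℝ)+1) * (t.choose i : ℝ) = ((t+1).choose (i+1) : ℝ) * ((i:ℝ)+1) := by
        exact_mod_cast congrArg (Nat.cast (R := ℝ)) (Nat.add_one_mul_choose_eq t i)
      have hi1 : ((i:ℝ)+1) ≠ 0 := by positivity
      have hneg : (-2:ℝ)^(i+1) = -((-1:ℝ)^i * 2^(i+1)) := by
        rw [show (-2:ℝ) = (-1) * 2 by ring, mul_pow, pow_succ]
        ring
      rw [hneg]
      field_simp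
      linear_combination hc
    rw [sum_congr rfl hterm]
    have hb := add_pow (-2:ℝ) 1 (t+1)
    simp only [one_pow, mul_one] at hb
    rw [Finset.sum_range_succ' (fun k => (-2:ℝ)^k * ((t+1).choose k : ℕ))] at hb
    norm_num at hb
    have hs : ∑ x ∈ range (t+1), -((((t+1).choose (x+1):ℕ):ℝ) * (-2:ℝ)^(x+1))
        = -∑ x ∈ range (t+1), ((-2:ℝ)^(x+1) * (((t+1).choose (x+1):ℕ):ℝ)) := by
      rw [← Finset.sum_neg_distrib]
      apply sum_congr rfl; intro i _; ring
    rw [hs]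
    have hsum : ∑ x ∈ range (t+1), ((-2:ℝ)^(x+1) * (((t+1).choose (x+1):ℕ):ℝ))
        = (-1:ℝ)^(t+1) - 1 := by linarith [hb]
    rw [hsum, pow_succ]
    ring
  have h3 : Sfun 1 (t+1) = (1 + (-1:ℝ)^t)/((t:ℝ)+1) := by
    rw [← h2]
    field_simp
  rw [h3, ee]
  field_simp
  linear_combination -neg_one_sq_pow t

lemma hock (P A : ℕ) :
    ∑ a ∈ range (A+1), (P+a).choose P = (P+A+1).choose (P+1) := by
  have h := Nat.sum_Icc_choose (P+A) P
  rw [← h, show Icc P (P+A) = Ico P (P+A+1) by rw [Finset.Ico_add_one_right_eq_Icc],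
    Finset.sum_Ico_eq_sum_range, show P+A+1-P = A+1 from by omega]

lemma NVnat (Q P A : ℕ) :
    ∑ a ∈ range (A+1), (P+a).choose P * (Q+(A-a)).choose Q
      = (P+Q+A+1).choose (P+Q+1) := by
  induction Q generalizing P A with
  | zero =>
    simp only [Nat.zero_add, Nat.choose_zero_right, mul_one]
    rw [hock P A]
    congr 1 <;> omega
  | succ Q ihQ =>
    have expand : ∀ a ∈ range (A+1), (P+a).choose P * ((Q+1)+(A-a)).choose (Q+1)
        = ∑ c ∈ range ((A+1)-a), (P+a).choose P * (Q+c).choose Q := by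
      intro a ha
      rw [mem_range, Nat.lt_succ_iff] at ha
      rw [show (A+1)-a = (A-a)+1 by omega, ← Finset.mul_sum, hock Q (A-a)]
      congr 2
      omega
    rw [sum_congr rfl expand,
      ← Finset.sum_range_diag_flip (A+1) (fun a c => (P+a).choose P * (Q+c).choose Q)]
    have h2 : ∀ m ∈ range (A+1),
        ∑ k ∈ range (m+1), (P+k).choose P * (Q+(m-k)).choose Q
          = ((P+Q+1)+m).choose ((P+Q+1)) := by
      intro m _
      rw [ihQ P m]
      congr 1
      omega
    rw [sum_congr rfl h2, hock (P+Q+1) A]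
    congr 1 <;> omega

lemma NV' (p q N : ℕ) (hp : 1 ≤ p) (hq : 1 ≤ q) :
    ∑ j ∈ range (N+1), TT j p * TT (N-j) q = TT N (p+q) := by
  by_cases hpq : p + q ≤ N
  · obtain ⟨P, rfl⟩ : ∃ P, p = P + 1 := ⟨p - 1, by omega⟩
    obtain ⟨Q, rfl⟩ : ∃ Q, q = Q + 1 := ⟨q - 1, by omega⟩
    obtain ⟨A, rfl⟩ : ∃ A, N = (P+1) + (Q+1) + A := ⟨N - (P+1) - (Q+1), by omega⟩
    set N := (P+1) + (Q+1) + A with hN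
    have hIco : ∑ j ∈ Ico (P+1) (P+1+(A+1)), TT j (P+1) * TT (N-j) (Q+1)
        = ∑ a ∈ range (A+1), TT ((P+1)+a) (P+1) * TT (N-((P+1)+a)) (Q+1) := by
      rw [Finset.sum_Ico_eq_sum_range, show P+1+(A+1)-(P+1) = A+1 from by omega]
    have hsub : ∑ j ∈ range (N+1), TT j (P+1) * TT (N-j) (Q+1)
        = ∑ a ∈ range (A+1), TT ((P+1)+a) (P+1) * TT (N-((P+1)+a)) (Q+1) := by
      rw [← hIco]
      symm
      apply Finset.sum_subset
      · intro j hj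
        rw [mem_Ico] at hj
        rw [mem_range]
        omega
      · intro j hj hj2
        rw [mem_range] at hj
        rw [mem_Ico] at hj2
        rcases Nat.lt_or_ge j (P+1) with h | h
        · rw [TT_eq_zero (by omega), zero_mul]
        · rw [TT_eq_zero (n := N - j) (by omega), mul_zero]
    rw [hsub]
    have hterm : ∀ a ∈ range (A+1), TT ((P+1)+a) (P+1) * TT (N-((P+1)+a)) (Q+1)
        = (((P+a).choose P * (Q+(A-a)).choose Q : ℕ) : ℝ) * (2^(P+1) * 2^(Q+1)) := by
      intro a ha
      rw [mem_range, Nat.lt_succ_iff] at ha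
      rw [TT, if_pos (by omega), TT, if_pos (by omega)]
      rw [show (P+1)+a-1 = P+a by omega, show (P+1)-1 = P by omega,
        show N-((P+1)+a)-1 = Q+(A-a) by omega, show (Q+1)-1 = Q by omega]
      push_cast
      ring
    rw [sum_congr rfl hterm, ← Finset.sum_mul, ← Nat.cast_sum, NVnat]
    rw [TT, if_pos (by omega)]
    rw [show N-1 = P+Q+A+1 by omega, show (P+1)+(Q+1)-1 = P+Q+1 by omega]
    ring
  · rw [TT_eq_zero (by omega)]
    apply Finset.sum_eq_zero
    intro j hj
    rw [mem_range] at hj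
    rcases Nat.lt_or_ge j p with h | h
    · rw [TT_eq_zero (by omega), zero_mul]
    · rw [TT_eq_zero (n := N - j) (by omega), mul_zero]

lemma pairDiag (N : ℕ) (g : ℕ → ℕ → ℝ) (h : ℕ → ℝ) (hh : ∀ m, N < m → h m = 0) :
    ∑ p ∈ range (N+1), ∑ q ∈ range (N+1), g p q * h (p+q)
      = ∑ m ∈ range (N+1), (∑ p ∈ range (m+1), g p (m-p)) * h m := by
  have shrink : ∀ p ∈ range (N+1), ∑ q ∈ range (N+1), g p q * h (p+q)
      = ∑ q ∈ range ((N+1)-p), g p q * h (p+q) := by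
    intro p hp
    rw [mem_range, Nat.lt_succ_iff] at hp
    symm
    apply Finset.sum_subset
    · intro q hq
      rw [mem_range] at hq ⊢
      omega
    · intro q hq hq2
      rw [mem_range] at hq hq2
      rw [hh (p+q) (by omega), mul_zero]
  rw [sum_congr rfl shrink,
    ← Finset.sum_range_diag_flip (N+1) (fun p q => g p q * h (p+q))]
  apply sum_congr rfl
  intro m hm
  rw [Finset.sum_mul]
  apply sum_congr rfl
  intro k hk
  rw [mem_range, Nat.lt_succ_iff] at hk
  rw [show k + (m-k) = m by omega]

lemma claimB (k : ℕ) (N : ℕ) :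
    Sfun (k+1) N = ∑ j ∈ range (N+1), Sfun 1 j * Sfun k (N-j) := by
  rcases Nat.eq_zero_or_pos k with rfl | hk
  · symm
    rw [Finset.sum_eq_single_of_mem N (by rw [mem_range]; omega)]
    · have hS0 : Sfun 0 0 = 1 := by rw [Sfun]; norm_num
      rw [Nat.sub_self, hS0, mul_one]
    · intro j hj hjne
      rw [mem_range, Nat.lt_succ_iff] at hj
      have hS : Sfun 0 (N-j) = 0 := by
        rw [Sfun, if_pos rfl, if_neg (by omega)]
      rw [hS, mul_zero]
  · have hk' : k ≠ 0 := by omega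
    rw [Sfun_eq (by omega) N]
    have expand : ∀ j ∈ range (N+1), Sfun 1 j * Sfun k (N-j)
        = ∑ p ∈ range (N+1), ∑ q ∈ range (N+1), (cc 1 p * cc k q) * (TT j p * TT (N-j) q) := by
      intro j hj
      rw [mem_range, Nat.lt_succ_iff] at hj
      rw [Sfun_eq one_ne_zero j, Sfun_eq hk' (N-j)]
      have e1 : ∑ m ∈ range (j+1), TT j m * cc 1 m = ∑ m ∈ range (N+1), TT j m * cc 1 m := by
        apply Finset.sum_subset
        · intro m hm; rw [mem_range] at hm ⊢; omega
        · intro m hm hm2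
          rw [mem_range] at hm hm2
          rw [TT_eq_zero (by omega), zero_mul]
      have e2 : ∑ m ∈ range ((N-j)+1), TT (N-j) m * cc k m
          = ∑ m ∈ range (N+1), TT (N-j) m * cc k m := by
        apply Finset.sum_subset
        · intro m hm; rw [mem_range] at hm ⊢; omega
        · intro m hm hm2
          rw [mem_range] at hm hm2
          rw [TT_eq_zero (by omega), zero_mul]
      rw [e1, e2, Finset.sum_mul_sum]
      apply sum_congr rfl; intro p _
      apply sum_congr rfl; intro q _
      ring
    rw [sum_congr rfl expand]
    rw [Finset.sum_comm]
    have swapq : ∀ p ∈ range (N+1),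
        ∑ j ∈ range (N+1), ∑ q ∈ range (N+1), (cc 1 p * cc k q) * (TT j p * TT (N-j) q)
          = ∑ q ∈ range (N+1), (cc 1 p * cc k q) * (∑ j ∈ range (N+1), TT j p * TT (N-j) q) := by
      intro p _
      rw [Finset.sum_comm]
      apply sum_congr rfl; intro q _
      rw [Finset.mul_sum]
    rw [sum_congr rfl swapq]
    have inner : ∀ p ∈ range (N+1), ∀ q ∈ range (N+1),
        (cc 1 p * cc k q) * (∑ j ∈ range (N+1), TT j p * TT (N-j) q)
          = (cc 1 p * cc k q) * TT N (p+q) := by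
      intro p _ q _
      rcases Nat.eq_zero_or_pos p with rfl | hp
      · rw [cc_eq_zero (by omega), zero_mul, zero_mul, zero_mul]
      rcases Nat.eq_zero_or_pos q with rfl | hq
      · rw [cc_eq_zero (m := 0) (by omega), mul_zero, zero_mul, zero_mul]
      rw [NV' p q N hp hq]
    rw [sum_congr rfl (fun p hp => sum_congr rfl (inner p hp))]
    have : ∀ p ∈ range (N+1), ∀ q ∈ range (N+1),
        (cc 1 p * cc k q) * TT N (p+q) = (fun p q => cc 1 p * cc k q) p q * TT N (p+q) := by
      intro p _ q _; rfl
    rw [pairDiag N (fun p q => cc 1 p * cc k q) (TT N) (fun m hm => TT_eq_zero hm)]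
    apply sum_congr rfl
    intro m _
    rw [← cc_conv k m]
    ring

lemma convStep (k N : ℕ) :
    ∑ j ∈ range (N-k), Sfun 1 (j+1) * Sfun k (N-(j+1)) = Sfun (k+1) N := by
  rw [claimB k N, Finset.sum_range_succ' (fun j => Sfun 1 j * Sfun k (N-j))]
  have h0 : Sfun 1 0 = 0 := Sfun_eq_zero one_ne_zero (by omega)
  rw [h0, zero_mul, add_zero]
  apply Finset.sum_subset
  · intro j hj; rw [mem_range] at hj ⊢; omega
  · intro j hj hj2
    rw [mem_range] at hj hj2
    rcases Nat.eq_zero_or_pos k with rfl | hk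
    · exact (hj2 (by omega)).elim
    · rw [Sfun_eq_zero (k := k) (n := N-(j+1)) (by omega) (by omega), mul_zero]

lemma PStmt (k n : ℕ) (a : ℝ) :
    (⇑(derivative (R := ℝ)))^[k] (Kp n a)
      = ((-1:ℝ)^k) • ∑ i ∈ range (n+1-k), Sfun k (n-i) • Kp i a := by
  induction k generalizing n with
  | zero =>
    simp only [Function.iterate_zero, id_eq, pow_zero, one_smul, Nat.sub_zero]
    symm
    rw [Finset.sum_eq_single_of_mem n (by rw [mem_range]; omega)]
    · have hS0 : Sfun 0 0 = 1 := by rw [Sfun]; norm_num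
      rw [Nat.sub_self, hS0, one_smul]
    · intro i hi hine
      rw [mem_range, Nat.lt_succ_iff] at hi
      have hS : Sfun 0 (n-i) = 0 := by rw [Sfun, if_pos rfl, if_neg (by omega)]
      rw [hS, zero_smul]
  | succ k ih =>
    rw [Function.iterate_succ_apply, KD]
    have hco : ∀ t : ℕ, (-(((-1:ℝ)^t) * ee t) - ee t) = -(Sfun 1 (t+1)) := by
      intro t; rw [Sfun_one_succ]; ring
    simp only [hco]
    rw [iter_deriv_sum_smul]
    have step : ∀ t ∈ range n,
        (-(Sfun 1 (t+1))) • (⇑(derivative (R := ℝ)))^[k] (Kp (n-(t+1)) a)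
          = ((-1:ℝ)^(k+1)) • ∑ i ∈ range ((n-k)-t),
              (Sfun 1 (t+1) * Sfun k ((n-(t+1))-i)) • Kp i a := by
      intro t ht
      rw [mem_range] at ht
      rw [ih (n-(t+1)), show (n-(t+1))+1-k = (n-k)-t by omega, smul_smul,
        show -(Sfun 1 (t+1)) * (-1:ℝ)^k = (-1:ℝ)^(k+1) * Sfun 1 (t+1) by
          rw [pow_succ]; ring,
        ← smul_smul]
      congr 1
      rw [Finset.smul_sum]
      apply sum_congr rfl
      intro i _
      rw [smul_smul]
    rw [sum_congr rfl step, ← Finset.smul_sum]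
    congr 1
    have hshrink : ∑ t ∈ range n, ∑ i ∈ range ((n-k)-t),
          (Sfun 1 (t+1) * Sfun k ((n-(t+1))-i)) • Kp i a
        = ∑ t ∈ range (n-k), ∑ i ∈ range ((n-k)-t),
          (Sfun 1 (t+1) * Sfun k ((n-(t+1))-i)) • Kp i a := by
      symm
      apply Finset.sum_subset
      · intro t ht; rw [mem_range] at ht ⊢; omega
      · intro t ht ht2
        rw [mem_range] at ht ht2
        rw [show (n-k)-t = 0 by omega, range_zero, sum_empty]
    rw [hshrink, swapDiag (n-k), show n+1-(k+1) = n-k by omega]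
    apply sum_congr rfl
    intro i hi
    rw [mem_range] at hi
    rw [← Finset.sum_smul]
    congr 1
    have conv := convStep k (n-i)
    rw [show (n-i)-k = (n-k)-i by omega] at conv
    rw [← conv]
    apply sum_congr rfl
    intro j hj
    rw [mem_range] at hj
    rw [show (n-(j+1))-i = (n-i)-(j+1) by omega]

/-- `d^k/dx^k K_n(x,a) = (-1)^k ∑_{i=0}^{n-k} K_i(x,a) S^{(k)}(n-i)`
(the sum being empty when `k > n`). -/
theorem kravchuk_iterated_deriv_x (k n : ℕ) (a x : ℝ) :
    deriv^[k] (fun t : ℝ => K n t a) x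
      = (-1 : ℝ) ^ k * ∑ i ∈ Finset.range (n + 1 - k), K i x a * Sfun k (n - i) := by
  have hf : (fun t : ℝ => K n t a) = (fun t : ℝ => (Kp n a).eval t) := by
    funext t; rw [Kp_eval]
  rw [hf, iter_deriv_eval, PStmt, Polynomial.eval_smul, Polynomial.eval_finset_sum,
    smul_eq_mul]
  congr 1
  apply sum_congr rfl
  intro i _
  rw [Polynomial.eval_smul, smul_eq_mul, Kp_eval, mul_comm]
end

section
/- For every integer i ≥ 1, the exponential generating function of the numbers T(n,i) := ∑_{j=i}^{n} (−1)^{j−i} · 2^{n−j} · j! · S(n,j) · binom(j−1, i−1) (with T(n,i) := 0 for n < i) is given, as an identity of formal power series in ℚ⟦z⟧, by ∑_{n≥0} T(n,i)·z^n/n! = ((E − 1)·(E + 1)^{−1})^i, where E := exp(2z) = ∑_{m≥0} 2^m z^m/m! and E + 1 is invertible in ℚ⟦z⟧ (its constant term is 2). -/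
/-- Stirling numbers of the second kind: the number of partitions of an `n`-element
set into `k` nonempty blocks (via the standard recurrence). -/
def stirling2 : ℕ → ℕ → ℕ
  | 0, 0 => 1
  | 0, _ + 1 => 0
  | _ + 1, 0 => 0
  | n + 1, k + 1 => stirling2 n k + (k + 1) * stirling2 n (k + 1)

/-- `T(n,i) = ∑_{j=i}^n (-1)^{j-i} 2^{n-j} j! S(n,j) binom(j-1,i-1)`
(automatically `0` when `n < i`). -/
noncomputable def T (n i : ℕ) : ℚ :=
  ∑ j ∈ Finset.Icc i n,
    (-1 : ℚ) ^ (j - i) * 2 ^ (n - j) * (Nat.factorial j) * stirling2 n j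
      * ((j - 1).choose (i - 1))

/-- `E = exp(2z) = ∑_m 2^m z^m/m!`. -/
noncomputable def E : PowerSeries ℚ := PowerSeries.mk fun m => (2 : ℚ) ^ m / Nat.factorial m

open PowerSeries Finset

lemma stirling2_eq_zero : ∀ {n j : ℕ}, n < j → stirling2 n j = 0 := by
  intro n
  induction n with
  | zero => intro j h; match j, h with | j+1, _ => rfl
  | succ n ih =>
    intro j h
    match j, h with
    | k+1, h =>
      show stirling2 n k + (k+1) * stirling2 n (k+1) = 0
      rw [ih (by omega), ih (by omega)]; ring

lemma coeff_E (n : ℕ) : (coeff n) E = 2 ^ n / Nat.factorial n := coeff_mk _ _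

lemma two_eq_C : (2 : ℚ⟦X⟧) = PowerSeries.C (R := ℚ) 2 := (map_ofNat (C (R := ℚ)) 2).symm

lemma deriv_E : (PowerSeries.derivative ℚ) E = 2 * E := by
  ext n
  rw [PowerSeries.coeff_derivative, two_eq_C, coeff_C_mul, coeff_E, coeff_E,
    Nat.factorial_succ]
  have h1 : (Nat.factorial n : ℚ) ≠ 0 := Nat.cast_ne_zero.mpr (Nat.factorial_ne_zero n)
  have h2 : ((n:ℚ) + 1) ≠ 0 := by positivity
  field_simp
  push_cast
  ring

lemma coeff_Esub_pow : ∀ (n j : ℕ), (coeff (R := ℚ) n) ((E - 1) ^ j)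
    = 2 ^ n * Nat.factorial j * stirling2 n j / Nat.factorial n := by
  intro n
  induction n with
  | zero =>
    intro j
    rw [coeff_zero_eq_constantCoeff, map_pow]
    have : constantCoeff (R := ℚ) (E - 1) = 0 := by
      simp [E, constantCoeff_mk]
    rw [this]
    cases j with
    | zero => simp [stirling2]
    | succ j => simp [stirling2_eq_zero (Nat.succ_pos j), zero_pow (Nat.succ_ne_zero j)]
  | succ n ih =>
    intro j
    have hn1 : ((n:ℚ)+1) ≠ 0 := by positivity
    have hkey : (coeff (n+1)) ((E-1)^j) * ((n:ℚ)+1)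
        = (coeff n) ((PowerSeries.derivative ℚ) ((E-1)^j)) := by
      rw [PowerSeries.coeff_derivative]
    cases j with
    | zero =>
      simp [show stirling2 (n+1) 0 = 0 from rfl]
    | succ j =>
      have hd : (PowerSeries.derivative ℚ) ((E-1)^(j+1))
          = ((j:ℚ⟦X⟧)+1) * (2 * ((E-1)^(j+1) + (E-1)^j)) := by
        rw [Derivation.leibniz_pow]
        have : (PowerSeries.derivative ℚ) (E - 1) = 2 * E := by
          rw [map_sub, deriv_E]
          simp
        rw [this]
        have hE : E = (E - 1) + 1 := by ring
        rw [nsmul_eq_mul, smul_eq_mul]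
        nth_rewrite 1 [hE]
        push_cast
        ring
      have h2 : (coeff (n+1)) ((E-1)^(j+1)) * ((n:ℚ)+1)
          = ((j:ℚ)+1) * (2 * ((coeff n) ((E-1)^(j+1)) + (coeff n) ((E-1)^j))) := by
        rw [hkey, hd]
        rw [show ((j:ℚ⟦X⟧)+1) = PowerSeries.C (R := ℚ) ((j:ℚ)+1) by push_cast; simp]
        rw [coeff_C_mul, two_eq_C, coeff_C_mul, map_add]
      rw [ih, ih] at h2
      have hs : (stirling2 (n+1) (j+1) : ℚ) = stirling2 n j + ((j:ℚ)+1) * stirling2 n (j+1) := by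
        show ((stirling2 n j + (j + 1) * stirling2 n (j + 1) : ℕ) : ℚ) = _
        push_cast; ring
      have hfn : (Nat.factorial n : ℚ) ≠ 0 := Nat.cast_ne_zero.mpr (Nat.factorial_ne_zero n)
      have hfact : (Nat.factorial (n+1) : ℚ) = ((n:ℚ)+1) * Nat.factorial n := by
        rw [Nat.factorial_succ]; push_cast; ring
      have hfj : (Nat.factorial (j+1) : ℚ) = ((j:ℚ)+1) * Nat.factorial j := by
        rw [Nat.factorial_succ]; push_cast; ring
      have hc : (coeff (n+1)) ((E-1)^(j+1))
          = (((j:ℚ)+1) * (2 * (2 ^ n * Nat.factorial (j+1) * stirling2 n (j+1) / Nat.factorial n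
              + 2 ^ n * Nat.factorial j * stirling2 n j / Nat.factorial n))) / ((n:ℚ)+1) := by
        rw [eq_div_iff hn1]; exact h2
      rw [hc, hs, hfj, hfact]
      field_simp
      ring

/-- coefficient function of the series `X^i/(2+X)^i`. -/
noncomputable def gfun (i j : ℕ) : ℚ :=
  if i ≤ j then (-1:ℚ)^(j-i) * ((j-1).choose (i-1)) / 2^j else 0

noncomputable def Gs (i : ℕ) : ℚ⟦X⟧ := PowerSeries.mk (gfun i)

lemma coeff_mul_two_add_X (f : ℚ⟦X⟧) (t : ℕ) :
    (coeff (t+1)) (f * (2 + X)) = 2 * (coeff (t+1)) f + (coeff t) f := by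
  rw [mul_add, map_add, coeff_succ_mul_X, two_eq_C, mul_comm f, coeff_C_mul]

lemma coeff_zero_mul_two_add_X (f : ℚ⟦X⟧) :
    (coeff 0) (f * (2 + X)) = 2 * (coeff 0) f := by
  rw [mul_add, map_add, two_eq_C, mul_comm f, coeff_C_mul]
  simp [coeff_zero_eq_constantCoeff, mul_comm]

lemma Gs_one : Gs 1 * (2 + X) = X := by
  ext t
  cases t with
  | zero => rw [coeff_zero_mul_two_add_X]; simp [Gs, gfun]
  | succ t =>
    rw [coeff_mul_two_add_X]
    simp only [Gs, coeff_mk, gfun]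
    cases t with
    | zero => norm_num
    | succ t =>
      rw [if_pos (by omega), if_pos (by omega)]
      rw [coeff_X, if_neg (by omega)]
      rw [show t + 1 + 1 - 1 = t + 1 by omega, show t + 1 - 1 = t by omega]
      norm_num [Nat.choose_zero_right, pow_succ]
      ring

lemma Gs_mul (m : ℕ) : Gs (m+2) * (2 + X) = X * Gs (m+1) := by
  ext t
  cases t with
  | zero =>
    rw [coeff_zero_mul_two_add_X]
    simp [Gs, gfun, coeff_zero_eq_constantCoeff, map_mul]
  | succ t =>
    rw [coeff_mul_two_add_X, mul_comm X, coeff_succ_mul_X]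
    simp only [Gs, coeff_mk]
    unfold gfun
    rcases lt_trichotomy t (m+1) with h|h|h
    · rw [if_neg (by omega), if_neg (by omega), if_neg (by omega)]; ring
    · subst h
      rw [if_pos (by omega), if_neg (by omega), if_pos (by omega)]
      rw [show m+1+1-(m+2) = 0 by omega, show m+1-(m+1) = 0 by omega,
        show m+1+1-1 = m+1 by omega, show m+1-1 = m by omega]
      norm_num [Nat.choose_self, pow_succ]
      ring
    · obtain ⟨k, rfl⟩ : ∃ k, t = m+2+k := ⟨t - (m+2), by omega⟩
      rw [if_pos (by omega), if_pos (by omega), if_pos (by omega)]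
      rw [show m+2+k+1-(m+2) = k+1 by omega, show m+2+k-(m+2) = k by omega,
        show m+2+k-(m+1) = k+1 by omega, show m+2+k+1-1 = m+2+k by omega,
        show m+2-1 = m+1 by omega, show m+2+k-1 = m+1+k by omega,
        show m+1-1 = m by omega]
      have hp : (m+2+k).choose (m+1) = (m+1+k).choose m + (m+1+k).choose (m+1) := by
        rw [show m+2+k = (m+1+k)+1 by ring]
        exact Nat.choose_succ_succ _ _
      rw [hp]
      push_cast
      ring

lemma Gs_key : ∀ i : ℕ, Gs (i+1) * (2 + X) ^ (i+1) = X ^ (i+1) := by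
  intro i
  induction i with
  | zero => rw [pow_one, pow_one, Gs_one]
  | succ i ih =>
    calc Gs (i+2) * (2+X)^(i+2) = (Gs (i+2) * (2+X)) * (2+X)^(i+1) := by ring
    _ = X * (Gs (i+1) * (2+X)^(i+1)) := by rw [Gs_mul]; ring
    _ = X ^ (i+2) := by rw [ih]; ring

lemma coeff_two_add_X_pow (i b : ℕ) :
    (coeff b) (((2:ℚ⟦X⟧) + X)^i) = (i.choose b : ℚ) * 2^(i-b) := by
  rw [add_comm (2:ℚ⟦X⟧) X, add_pow, map_sum]
  have h : ∀ k ∈ range (i+1), (coeff b) (X^k * (2:ℚ⟦X⟧)^(i-k) * ((i.choose k : ℕ) : ℚ⟦X⟧))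
      = if k = b then (i.choose b : ℚ) * 2^(i-b) else 0 := by
    intro k hk
    rw [show (2:ℚ⟦X⟧)^(i-k) = C (R := ℚ) (2^(i-k)) by rw [two_eq_C, map_pow],
        show ((i.choose k : ℕ) : ℚ⟦X⟧) = C (R := ℚ) (i.choose k) by rw [map_natCast],
        show X^k * C (R := ℚ) (2^(i-k)) * C (R := ℚ) ((i.choose k : ℕ) : ℚ)
          = C (R := ℚ) (((i.choose k : ℕ) : ℚ) * 2^(i-k)) * X^k by rw [map_mul]; ring,
        coeff_C_mul, coeff_X_pow]
    by_cases h : k = b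
    · subst h; simp
    · rw [if_neg (fun hh => h hh.symm), if_neg h, mul_zero]
  rw [Finset.sum_congr rfl h, Finset.sum_ite_eq' (range (i+1)) b]
  by_cases hb : b ∈ range (i+1)
  · rw [if_pos hb]
  · rw [if_neg hb]
    rw [Nat.choose_eq_zero_of_lt (by simp at hb; omega)]
    simp

lemma key_sum (i t : ℕ) (hi : 1 ≤ i) :
    ∑ k ∈ range (t+1), gfun i k * ((i.choose (t-k) : ℚ) * 2^(i-(t-k)))
      = if t = i then 1 else 0 := by
  obtain ⟨m, rfl⟩ : ∃ m, i = m+1 := ⟨i-1, by omega⟩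
  have h := congrArg (coeff t) (Gs_key m)
  rw [PowerSeries.coeff_mul, Finset.Nat.sum_antidiagonal_eq_sum_range_succ_mk,
    coeff_X_pow] at h
  rw [← h]
  apply Finset.sum_congr rfl
  intro k hk
  rw [coeff_two_add_X_pow]
  simp [Gs, coeff_mk]

lemma Epow_expand (i : ℕ) : (E+1)^i
    = ∑ m ∈ range (i+1), C (R := ℚ) ((i.choose m : ℚ) * 2^(i-m)) * (E-1)^m := by
  rw [show E + 1 = (E - 1) + 2 by ring, add_pow]
  apply Finset.sum_congr rfl
  intro m hm
  rw [show (2:ℚ⟦X⟧)^(i-m) = C (R := ℚ) (2^(i-m)) by rw [two_eq_C, map_pow],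
      show ((i.choose m : ℕ) : ℚ⟦X⟧) = C (R := ℚ) (i.choose m) by rw [map_natCast],
      show (E-1)^m * C (R := ℚ) (2^(i-m)) * C (R := ℚ) ((i.choose m : ℕ) : ℚ)
        = (C (R := ℚ) ((i.choose m : ℕ) : ℚ) * C (R := ℚ) (2^(i-m))) * (E-1)^m by ring,
      ← map_mul]

lemma T_div_eq (i k n : ℕ) (hk : k ≤ n) :
    T k i / (Nat.factorial k : ℚ)
      = ∑ j ∈ range (n+1), gfun i j * (coeff k) ((E-1)^j) := by
  rw [← Finset.sum_subset (s₁ := Finset.Icc i k) (fun j hj => by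
      simp only [Finset.mem_Icc] at hj; exact Finset.mem_range.mpr (by omega))
      (fun j hj hnj => ?_), T, Finset.sum_div]
  · apply Finset.sum_congr rfl
    intro j hj
    simp only [Finset.mem_Icc] at hj
    rw [gfun, if_pos hj.1, coeff_Esub_pow]
    have h2 : (2:ℚ)^(k-j) = 2^k / 2^j := by
      rw [pow_sub₀ (2:ℚ) (by norm_num) hj.2]
      rfl
    rw [h2]
    have hfk : (Nat.factorial k : ℚ) ≠ 0 := Nat.cast_ne_zero.mpr (Nat.factorial_ne_zero k)
    field_simp
  · simp only [Finset.mem_range, Finset.mem_Icc, not_and_or, not_le] at hj hnj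
    rcases hnj with h | h
    · rw [gfun, if_neg (by omega), zero_mul]
    · rw [coeff_Esub_pow, stirling2_eq_zero h]
      simp

lemma chain (i n : ℕ) (hi : 1 ≤ i) (ρ : ℕ → ℚ) (hρ : ∀ t, n < t → ρ t = 0) :
    ∑ j ∈ range (n+1), gfun i j * ∑ m ∈ range (i+1), ((i.choose m : ℚ) * 2^(i-m)) * ρ (j+m)
      = ρ i := by
  have h1 : ρ i = ∑ t ∈ range (n+1), (if t = i then 1 else 0) * ρ t := by
    rw [Finset.sum_congr rfl (fun t _ => by rw [ite_mul, one_mul, zero_mul]),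
      Finset.sum_ite_eq' (range (n+1)) i ρ]
    by_cases h : i ∈ range (n+1)
    · rw [if_pos h]
    · rw [if_neg h, hρ i (by simpa using h)]
  have h1b : ∑ t ∈ range (n+1), (if t = i then 1 else 0) * ρ t
      = ∑ t ∈ range (n+1),
          (∑ k ∈ range (t+1), gfun i k * ((i.choose (t-k) : ℚ) * 2^(i-(t-k)))) * ρ t :=
    Finset.sum_congr rfl (fun t _ => by rw [key_sum i t hi])
  rw [h1, h1b]
  have h2 : ∀ t ∈ range (n+1),
      (∑ k ∈ range (t+1), gfun i k * ((i.choose (t-k) : ℚ) * 2^(i-(t-k)))) * ρ t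
      = ∑ k ∈ range (n+1), (if k ≤ t then gfun i k * ((i.choose (t-k) : ℚ) * 2^(i-(t-k))) * ρ t else 0) := by
    intro t ht
    rw [Finset.sum_mul, show range (t+1) = (range (n+1)).filter (· ≤ t) from by
      ext x; simp only [Finset.mem_range, Finset.mem_filter]
      simp at ht
      constructor
      · intro h; exact ⟨by omega, by omega⟩
      · intro h; omega, Finset.sum_filter]
  rw [Finset.sum_congr rfl h2, Finset.sum_comm]
  apply Finset.sum_congr rfl
  intro k hk
  have hkn : k ≤ n := by simp at hk; omega
  have h3 : ∑ t ∈ range (n+1), (if k ≤ t then gfun i k * ((i.choose (t-k) : ℚ) * 2^(i-(t-k))) * ρ t else 0)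
      = ∑ t ∈ Ico k (n+1), gfun i k * ((i.choose (t-k) : ℚ) * 2^(i-(t-k))) * ρ t := by
    rw [show Ico k (n+1) = (range (n+1)).filter (k ≤ ·) from by
      ext x; simp only [Finset.mem_range, Finset.mem_filter, Finset.mem_Ico]; omega,
      Finset.sum_filter]
  rw [h3, Finset.sum_Ico_eq_sum_range]
  simp only [Nat.add_sub_cancel_left, show ∀ m, n + 1 - k = n + 1 - k from fun _ => rfl]
  have h4 : ∀ m ∈ range (n+1-k), gfun i k * ((i.choose m : ℚ) * 2^(i-m)) * ρ (k+m)
      = gfun i k * (((i.choose m : ℚ) * 2^(i-m)) * ρ (k+m)) := fun m _ => by ring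
  rw [Finset.sum_congr rfl h4, ← Finset.mul_sum]
  congr 1
  have e1 : ∑ m ∈ range (n+1-k), ((i.choose m : ℚ) * 2^(i-m)) * ρ (k+m)
      = ∑ m ∈ range (n+i+1), ((i.choose m : ℚ) * 2^(i-m)) * ρ (k+m) := by
    apply Finset.sum_subset (fun m hm => by simp at hm ⊢; omega)
    intro m hm hnm
    rw [hρ (k+m) (by simp at hm hnm; omega), mul_zero]
  have e2 : ∑ m ∈ range (i+1), ((i.choose m : ℚ) * 2^(i-m)) * ρ (k+m)
      = ∑ m ∈ range (n+i+1), ((i.choose m : ℚ) * 2^(i-m)) * ρ (k+m) := by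
    apply Finset.sum_subset (fun m hm => by simp at hm ⊢; omega)
    intro m hm hnm
    rw [Nat.choose_eq_zero_of_lt (by simp at hm hnm; omega)]
    simp
  rw [e1, ← e2]

/-- The exponential generating function of `T(·,i)` for `i ≥ 1`:
`∑_n T(n,i) z^n/n! = ((E-1)(E+1)⁻¹)^i` where `E = exp(2z)`. -/
theorem egf_T (i : ℕ) (hi : 1 ≤ i) :
    PowerSeries.mk (fun n => T n i / (Nat.factorial n : ℚ))
      = ((E - 1) * (E + 1)⁻¹) ^ i := by
  have hconst : constantCoeff (R := ℚ) (E + 1) ≠ 0 := by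
    rw [map_add, map_one]
    have h : constantCoeff (R := ℚ) E = 1 := by
      rw [← coeff_zero_eq_constantCoeff_apply, coeff_E]; norm_num
    rw [h]; norm_num
  have hmain : PowerSeries.mk (fun n => T n i / (Nat.factorial n : ℚ)) * (E+1)^i
      = (E-1)^i := by
    ext n
    rw [PowerSeries.coeff_mul, Finset.Nat.sum_antidiagonal_eq_sum_range_succ_mk]
    have hstep1 : ∀ k ∈ range (n+1),
        (coeff (k, n-k).1) (PowerSeries.mk fun n => T n i / (Nat.factorial n : ℚ))
            * (coeff (k, n-k).2) ((E+1)^i)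
        = ∑ j ∈ range (n+1),
            gfun i j * ((coeff k) ((E-1)^j) * (coeff (n-k)) ((E+1)^i)) := by
      intro k hk
      show (coeff k) (PowerSeries.mk fun n => T n i / (Nat.factorial n : ℚ))
          * (coeff (n-k)) ((E+1)^i) = _
      rw [coeff_mk, T_div_eq i k n (by simp at hk; omega), Finset.sum_mul]
      exact Finset.sum_congr rfl (fun j _ => by ring)
    rw [Finset.sum_congr rfl hstep1, Finset.sum_comm]
    have hstep2 : ∀ j ∈ range (n+1),
        ∑ k ∈ range (n+1), gfun i j * ((coeff k) ((E-1)^j) * (coeff (n-k)) ((E+1)^i))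
        = gfun i j * (coeff n) ((E-1)^j * (E+1)^i) := by
      intro j _
      rw [← Finset.mul_sum]
      congr 1
      rw [PowerSeries.coeff_mul, Finset.Nat.sum_antidiagonal_eq_sum_range_succ_mk]
    rw [Finset.sum_congr rfl hstep2]
    have hprod : ∀ j : ℕ, (E-1)^j * (E+1)^i
        = ∑ m ∈ range (i+1), C (R := ℚ) ((i.choose m : ℚ) * 2^(i-m)) * (E-1)^(j+m) := by
      intro j
      rw [Epow_expand, Finset.mul_sum]
      exact Finset.sum_congr rfl (fun m _ => by rw [pow_add]; ring)
    have hstep3 : ∀ j ∈ range (n+1),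
        gfun i j * (coeff n) ((E-1)^j * (E+1)^i)
        = gfun i j * ∑ m ∈ range (i+1),
            ((i.choose m : ℚ) * 2^(i-m)) * (coeff n) ((E-1)^(j+m)) := by
      intro j _
      rw [hprod j, map_sum]
      congr 1
      exact Finset.sum_congr rfl (fun m _ => by rw [coeff_C_mul])
    rw [Finset.sum_congr rfl hstep3]
    exact chain i n hi (fun t => (coeff n) ((E-1)^t)) (fun t ht => by
      show (coeff n) ((E-1)^t) = 0
      rw [coeff_Esub_pow, stirling2_eq_zero ht]; simp)
  have hu : (E+1) * (E+1)⁻¹ = 1 := PowerSeries.mul_inv_cancel _ hconst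
  calc PowerSeries.mk (fun n => T n i / (Nat.factorial n : ℚ))
      = PowerSeries.mk (fun n => T n i / (Nat.factorial n : ℚ)) * ((E+1) * (E+1)⁻¹)^i := by
        rw [hu, one_pow, mul_one]
    _ = (PowerSeries.mk (fun n => T n i / (Nat.factorial n : ℚ)) * (E+1)^i) * ((E+1)⁻¹)^i := by
        rw [mul_pow]; ring
    _ = (E-1)^i * ((E+1)⁻¹)^i := by rw [hmain]
    _ = ((E-1) * (E+1)⁻¹)^i := (mul_pow _ _ _).symm
end
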